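/- Assume B is a nondegenerate symmetric invariant bilinear form on g. Then the bilinear form ω on the eigenspace g₁ defined by ω(a,b) = B(f, [a,b]) is alternating (ω(a,a) = 0 for all a ∈ g₁) and nondegenerate: if a ∈ g₁ satisfies B(f,[a,b]) = 0 for all b ∈ g₁, then a = 0. (This is the symplectic form on g₁ used to choose the Lagrangian subspace l in the construction of W-algebras.) -/

import Mathlib

open LieModule Module

namespace W1Aux
set_option linter.unusedSectionVars false
set_option maxHeartbeats 1000000


set_option linter.unusedSectionVars false
variable {g : Type*} [LieRing g] [LieAlgebra ℂ g] [FiniteDimensional ℂ g]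

lemma exists_zero_of_maxGen (T : Module.End ℂ g) (μ : ℕ → ℂ) (hμ : Function.Injective μ)
    (w : ℕ → g) (hw : ∀ j, w j ∈ T.maxGenEigenspace (μ j)) : ∃ j, w j = 0 := by
  by_contra hc
  push_neg at hc
  have hind : LinearIndependent ℂ w :=
    iSupIndep.linearIndependent _ ((T.independent_maxGenEigenspace).comp hμ) hw hc
  have := hind.finite
  exact not_finite ℕ

lemma mem_maxGen_of_pow {T : Module.End ℂ g} {c : ℂ} {x : g} (k : ℕ)
    (hx : ((T - c • 1) ^ k) x = 0) : x ∈ T.maxGenEigenspace c :=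
  Module.End.mem_genEigenspace_top.mpr ⟨k, LinearMap.mem_ker.mpr hx⟩

lemma eq_zero_of_eig_mem_maxGen {T : Module.End ℂ g} {c d : ℂ} {x : g}
    (hx : T x = c • x) (hmem : x ∈ T.maxGenEigenspace d) (hcd : c ≠ d) : x = 0 := by
  rw [Module.End.mem_genEigenspace_top] at hmem
  obtain ⟨k, hk⟩ := hmem
  rw [LinearMap.mem_ker] at hk
  have key : ∀ m : ℕ, ((T - d • 1) ^ m) x = (c - d) ^ m • x := by
    intro m
    induction m with
    | zero => simp
    | succ m ih =>
      rw [pow_succ', Module.End.mul_apply, ih, map_smul]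
      rw [LinearMap.sub_apply, hx, LinearMap.smul_apply, Module.End.one_apply,
        ← sub_smul, smul_smul, ← pow_succ]
  rw [key k] at hk
  rcases smul_eq_zero.mp hk with h | h
  · exact absurd h (pow_ne_zero k (sub_ne_zero.mpr hcd))
  · exact h

variable {e h f : g}

lemma he_v (hhe : ⁅h, e⁆ = (2 : ℂ) • e) (x : g) :
    ⁅h, ⁅e, x⁆⁆ = (2 : ℂ) • ⁅e, x⁆ + ⁅e, ⁅h, x⁆⁆ := by
  rw [leibniz_lie, hhe, smul_lie]

lemma hf_v (hhf : ⁅h, f⁆ = (-2 : ℂ) • f) (x : g) :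
    ⁅h, ⁅f, x⁆⁆ = (-2 : ℂ) • ⁅f, x⁆ + ⁅f, ⁅h, x⁆⁆ := by
  rw [leibniz_lie, hhf, smul_lie]

lemma ef_v (hef : ⁅e, f⁆ = h) (x : g) :
    ⁅e, ⁅f, x⁆⁆ = ⁅h, x⁆ + ⁅f, ⁅e, x⁆⁆ := by
  rw [leibniz_lie, hef]

/-- The Casimir-type operator `4FE + H² + 2H`. -/
noncomputable def cas (e h f : g) : Module.End ℂ g :=
  (4 : ℂ) • (toEnd ℂ g g f * toEnd ℂ g g e) +
    toEnd ℂ g g h * toEnd ℂ g g h + (2 : ℂ) • toEnd ℂ g g h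

lemma cas_apply (x : g) :
    cas e h f x = (4 : ℂ) • ⁅f, ⁅e, x⁆⁆ + ⁅h, ⁅h, x⁆⁆ + (2 : ℂ) • ⁅h, x⁆ := by
  simp [cas, Module.End.mul_apply, toEnd_apply_apply]

lemma commute_cas_H (hhe : ⁅h, e⁆ = (2 : ℂ) • e) (hhf : ⁅h, f⁆ = (-2 : ℂ) • f)
    (hef : ⁅e, f⁆ = h) : Commute (cas e h f) (toEnd ℂ g g h) := by
  refine LinearMap.ext fun x => ?_
  simp only [Module.End.mul_apply, toEnd_apply_apply, cas_apply]
  rw [lie_add, lie_add, lie_smul, lie_smul, hf_v hhf, he_v hhe]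
  simp only [lie_add, lie_smul]
  module

lemma commute_cas_E (hhe : ⁅h, e⁆ = (2 : ℂ) • e) (hhf : ⁅h, f⁆ = (-2 : ℂ) • f)
    (hef : ⁅e, f⁆ = h) : Commute (cas e h f) (toEnd ℂ g g e) := by
  refine LinearMap.ext fun x => ?_
  simp only [Module.End.mul_apply, toEnd_apply_apply, cas_apply]
  simp only [lie_add, lie_smul, ef_v hef, he_v hhe]
  module

/-- The crux: `ad h` has no Jordan blocks at eigenvalue 1. -/
theorem crux (hhe : ⁅h, e⁆ = (2 : ℂ) • e) (hhf : ⁅h, f⁆ = (-2 : ℂ) • f)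
    (hef : ⁅e, f⁆ = h) {u v : g} (hu : ⁅h, u⁆ = u) (hv : ⁅h, v⁆ = v + u) : u = 0 := by
  by_contra hu0
  have hh0 : h ≠ 0 := by
    rintro rfl
    exact hu0 (by simpa using hu.symm)
  have t : IsSl2Triple h e f :=
    ⟨hh0, hef, by simp [hhe, two_smul], by simp [hhf, two_smul, neg_smul]⟩
  set E := toEnd ℂ g g e with hE
  set H := toEnd ℂ g g h with hH
  set F := toEnd ℂ g g f with hF
  have hEapp : ∀ (k : ℕ) (x : g), (E ^ (k + 1)) x = ⁅e, (E ^ k) x⁆ := by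
    intro k x
    rw [pow_succ', Module.End.mul_apply, hE, toEnd_apply_apply]
  -- Step 1 : climb u to a primitive vector
  have climb_u : ∀ k : ℕ, ⁅h, (E ^ k) u⁆ = ((1 + 2 * k : ℕ) : ℂ) • (E ^ k) u := by
    intro k
    induction k with
    | zero => simpa using hu
    | succ k ih =>
      rw [hEapp, he_v hhe, ih, lie_smul, ← hEapp]
      push_cast
      module
  have climb_v : ∀ k : ℕ, ⁅h, (E ^ k) v⁆ = ((1 + 2 * k : ℕ) : ℂ) • (E ^ k) v + (E ^ k) u := by
    intro k
    induction k with
    | zero => simpa using hv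
    | succ k ih =>
      rw [hEapp, he_v hhe, ih, lie_add, lie_smul, ← hEapp, ← hEapp]
      push_cast
      module
  -- existence of a vanishing power of E on u
  have hex : ∃ k, (E ^ k) u = 0 := by
    by_contra hc
    push_neg at hc
    obtain ⟨j, hj⟩ := exists_zero_of_maxGen H (fun k => ((1 + 2 * k : ℕ) : ℂ))
      (fun a b hab => by
        have : (a : ℂ) = b := by
          push_cast at hab
          linear_combination hab / 2
        exact_mod_cast this)
      (fun k => (E ^ k) u)
      (fun k => mem_maxGen_of_pow 1 (by
        rw [pow_one, LinearMap.sub_apply, LinearMap.smul_apply, Module.End.one_apply, hH,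
          toEnd_apply_apply, climb_u k, sub_self]))
    exact hc j hj
  obtain ⟨k, hk1, hk2⟩ := Nat.exists_not_and_succ_of_not_zero_of_exists
    (p := fun k => (E ^ k) u = 0) (by simpa using hu0) hex
  set n : ℕ := 1 + 2 * k with hn
  set u₁ := (E ^ k) u with hu₁
  set v₁ := (E ^ k) v with hv₁
  have hu₁h : ⁅h, u₁⁆ = (n : ℂ) • u₁ := climb_u k
  have hu₁e : ⁅e, u₁⁆ = 0 := by rw [← hEapp]; exact hk2
  have hv₁h : ⁅h, v₁⁆ = (n : ℂ) • v₁ + u₁ := climb_v k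
  -- Step 2: Casimir correction
  set C := cas e h f with hC
  have hCH : Commute C H := commute_cas_H hhe hhf hef
  have hCE : Commute C E := commute_cas_E hhe hhf hef
  set χ₀ : ℂ := (n : ℂ) ^ 2 + 2 * n with hχ₀
  have hCu₁ : C u₁ = χ₀ • u₁ := by
    rw [hC, cas_apply, hu₁e, hu₁h]
    simp only [lie_zero, smul_zero, zero_add, lie_smul, hu₁h, smul_smul]
    rw [hχ₀]; module
  set W := C.maxGenEigenspace χ₀ with hW
  have hu₁W : u₁ ∈ W := mem_maxGen_of_pow 1 (by
    rw [pow_one, LinearMap.sub_apply, LinearMap.smul_apply, Module.End.one_apply, hCu₁, sub_self])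
  set W' : Submodule ℂ g := ⨆ χ : {c : ℂ // c ≠ χ₀}, C.maxGenEigenspace ↑χ with hW'
  have hsplit : (⊤ : Submodule ℂ g) ≤ W ⊔ W' := by
    rw [← Module.End.iSup_maxGenEigenspace_eq_top C]
    refine iSup_le fun χ => ?_
    rcases eq_or_ne χ χ₀ with rfl | hne
    · exact le_sup_of_le_left le_rfl
    · exact le_sup_of_le_right
        (le_iSup (fun χ : {c : ℂ // c ≠ χ₀} => C.maxGenEigenspace ↑χ) ⟨χ, hne⟩)
  obtain ⟨w, hwW, w', hw'W', hww⟩ := Submodule.mem_sup.mp (hsplit (Submodule.mem_top (x := v₁)))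
  set T := H - (n : ℂ) • (1 : Module.End ℂ g) with hT
  have hTapp : ∀ x : g, T x = ⁅h, x⁆ - (n : ℂ) • x := by
    intro x
    rw [hT, LinearMap.sub_apply, LinearMap.smul_apply, Module.End.one_apply, hH, toEnd_apply_apply]
  have hTv₁ : T v₁ = u₁ := by rw [hTapp, hv₁h]; abel
  have hCT : Commute C T := hCH.sub_right (Commute.smul_right (Commute.one_right C) _)
  have hmapsT : ∀ χ : ℂ, Set.MapsTo T (C.maxGenEigenspace χ) (C.maxGenEigenspace χ) :=
    fun χ => Module.End.mapsTo_maxGenEigenspace_of_comm hCT χ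
  have hTw'W' : T w' ∈ W' := by
    refine Submodule.iSup_induction (motive := fun x => T x ∈ W') _ hw'W' ?_ (by simp) ?_
    · rintro ⟨χ, hχ⟩ x hx
      exact Submodule.mem_iSup_of_mem ⟨χ, hχ⟩ (hmapsT χ hx)
    · intro x y hx hy
      rw [map_add]
      exact Submodule.add_mem _ hx hy
  have hu₁sum : T w + T w' = u₁ := by rw [← map_add, hww, hTv₁]
  have hTwW : T w ∈ W := hmapsT χ₀ hwW
  have hTw'W : T w' ∈ W := by
    have hq : T w' = u₁ - T w := by rw [← hu₁sum]; abel
    rw [hq]; exact Submodule.sub_mem _ hu₁W hTwW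
  have hdisj : Disjoint W W' := by
    have hind := Module.End.independent_maxGenEigenspace C
    have h2 := iSupIndep_def.mp hind χ₀
    rwa [iSup_subtype'] at h2
  have hTw'0 : T w' = 0 := Submodule.disjoint_def.mp hdisj _ hTw'W hTw'W'
  have hTw : T w = u₁ := by rw [← hu₁sum, hTw'0, add_zero]
  have hwh : ⁅h, w⁆ = (n : ℂ) • w + u₁ := by
    have hq := hTapp w
    rw [hTw] at hq
    rw [hq]; abel
  -- Step 3: ⁅e, w⁆ = 0
  have hwe : ⁅e, w⁆ = 0 := by
    by_contra hz0
    set z := ⁅e, w⁆ with hz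
    have hzh : ⁅h, z⁆ = ((n : ℂ) + 2) • z := by
      rw [hz, he_v hhe, hwh, lie_add, lie_smul, hu₁e, add_zero]
      module
    have climb_z : ∀ j : ℕ, ⁅h, (E ^ j) z⁆ = ((n + 2 + 2 * j : ℕ) : ℂ) • (E ^ j) z := by
      intro j
      induction j with
      | zero =>
        simp only [pow_zero, Module.End.one_apply, hzh]
        push_cast
        module
      | succ j ih =>
        rw [hEapp, he_v hhe, ih, lie_smul, ← hEapp]
        push_cast
        module
    have hexz : ∃ j, (E ^ j) z = 0 := by
      by_contra hc
      push_neg at hc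
      obtain ⟨j, hj⟩ := exists_zero_of_maxGen H (fun j => ((n + 2 + 2 * j : ℕ) : ℂ))
        (fun a b hab => by
          have : (a : ℂ) = b := by
            push_cast at hab
            linear_combination hab / 2
          exact_mod_cast this)
        (fun j => (E ^ j) z)
        (fun j => mem_maxGen_of_pow 1 (by
          rw [pow_one, LinearMap.sub_apply, LinearMap.smul_apply, Module.End.one_apply, hH,
            toEnd_apply_apply, climb_z j, sub_self]))
      exact hc j hj
    obtain ⟨k', hk'1, hk'2⟩ := Nat.exists_not_and_succ_of_not_zero_of_exists
      (p := fun j => (E ^ j) z = 0) (by simpa using hz0) hexz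
    set n' : ℕ := n + 2 + 2 * k' with hn'
    set zh := (E ^ k') z with hzh2
    have hzhW : zh ∈ W := by
      have hzv : zh = (E ^ (k' + 1)) w := by
        rw [hzh2, pow_succ, Module.End.mul_apply]
        rfl
      rw [hzv]
      exact Module.End.mapsTo_maxGenEigenspace_of_comm (hCE.pow_right (k' + 1)) χ₀ hwW
    have hzhh : ⁅h, zh⁆ = (n' : ℂ) • zh := climb_z k'
    have hzhe : ⁅e, zh⁆ = 0 := by rw [hzh2, ← hEapp]; exact hk'2
    have hCzh : C zh = ((n' : ℂ) ^ 2 + 2 * n') • zh := by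
      rw [hC, cas_apply, hzhe, hzhh]
      simp only [lie_zero, smul_zero, zero_add, lie_smul, hzhh, smul_smul]
      module
    have hne : ((n' : ℂ) ^ 2 + 2 * (n' : ℂ)) ≠ χ₀ := by
      rw [hχ₀]
      intro hcon
      have hnat : n' ^ 2 + 2 * n' = n ^ 2 + 2 * n := by exact_mod_cast hcon
      have hlt : n ^ 2 < n' ^ 2 := Nat.pow_lt_pow_left (by omega) (by norm_num)
      omega
    exact hk'1 (eq_zero_of_eig_mem_maxGen hCzh hzhW hne)
  -- Step 4: the F-string of w must terminate, giving a contradiction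
  have hw0 : w ≠ 0 := by
    rintro rfl
    rw [map_zero] at hTw
    exact hk1 hTw.symm
  have P : t.HasPrimitiveVectorWith u₁ ((n : ℕ) : ℂ) := ⟨hk1, hu₁h, hu₁e⟩
  have hFapp : ∀ (j : ℕ) (x : g), (F ^ (j + 1)) x = ⁅f, (F ^ j) x⁆ := by
    intro j x
    rw [pow_succ', Module.End.mul_apply, hF, toEnd_apply_apply]
  have hr_h : ∀ j : ℕ, ⁅h, (F ^ j) u₁⁆ = ((n : ℂ) - 2 * j) • (F ^ j) u₁ :=
    fun j => P.lie_h_pow_toEnd_f j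
  have hq_h : ∀ j : ℕ, ⁅h, (F ^ j) w⁆ = ((n : ℂ) - 2 * j) • (F ^ j) w + (F ^ j) u₁ := by
    intro j
    induction j with
    | zero =>
      simp only [pow_zero, Module.End.one_apply, hwh]
      push_cast
      module
    | succ j ih =>
      rw [hFapp, hf_v hhf, ih, lie_add, lie_smul, ← hFapp, ← hFapp]
      push_cast
      module
  have hq_e : ∀ j : ℕ, ⁅e, (F ^ (j + 1)) w⁆ =
      (((j : ℂ) + 1) * ((n : ℂ) - j)) • (F ^ j) w + ((j : ℂ) + 1) • (F ^ j) u₁ := by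
    intro j
    induction j with
    | zero =>
      rw [hFapp, ef_v hef]
      simp only [pow_zero, Module.End.one_apply, hwe, lie_zero, add_zero, hwh]
      push_cast
      module
    | succ j ih =>
      rw [hFapp, ef_v hef, ih, hq_h (j + 1), lie_add, lie_smul, lie_smul, ← hFapp, ← hFapp]
      push_cast
      module
  have hexq : ∃ j, (F ^ j) w = 0 := by
    by_contra hc
    push_neg at hc
    obtain ⟨j, hj⟩ := exists_zero_of_maxGen H (fun j => (n : ℂ) - 2 * j)
      (fun a b hab => by
        have : (a : ℂ) = b := by linear_combination - hab / 2
        exact_mod_cast this)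
      (fun j => (F ^ j) w)
      (fun j => mem_maxGen_of_pow 2 (by
        have e1 : (H - ((n : ℂ) - 2 * j) • 1) ((F ^ j) w) = (F ^ j) u₁ := by
          rw [LinearMap.sub_apply, LinearMap.smul_apply, Module.End.one_apply, hH,
            toEnd_apply_apply, hq_h j]
          abel
        have e2 : (H - ((n : ℂ) - 2 * j) • 1) ((F ^ j) u₁) = 0 := by
          rw [LinearMap.sub_apply, LinearMap.smul_apply, Module.End.one_apply, hH,
            toEnd_apply_apply, hr_h j, sub_self]
        rw [pow_two, Module.End.mul_apply, e1, e2]))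
    exact hc j hj
  obtain ⟨m, hm1, hm2⟩ := Nat.exists_not_and_succ_of_not_zero_of_exists
    (p := fun j => (F ^ j) w = 0) (by simpa using hw0) hexq
  have hrel := hq_e m
  rw [hm2, lie_zero] at hrel
  have h3 : (((m : ℂ) + 1) * ((n : ℂ) - m)) • ((F ^ m) u₁) = 0 := by
    have lhs : ⁅h, (((m : ℂ) + 1) * ((n : ℂ) - m)) • (F ^ m) w + ((m : ℂ) + 1) • (F ^ m) u₁⁆
        - ((n : ℂ) - 2 * m) •
          ((((m : ℂ) + 1) * ((n : ℂ) - m)) • (F ^ m) w + ((m : ℂ) + 1) • (F ^ m) u₁)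
        = (((m : ℂ) + 1) * ((n : ℂ) - m)) • ((F ^ m) u₁) := by
      rw [lie_add, lie_smul, lie_smul, hq_h m, hr_h m]
      module
    rw [← hrel] at lhs
    simpa using lhs.symm
  by_cases hA : (((m : ℂ) + 1) * ((n : ℂ) - m)) = 0
  · have hnm : (n : ℂ) = m := by
      rcases mul_eq_zero.mp hA with h5 | h5
      · exact absurd h5 (Nat.cast_add_one_ne_zero m)
      · exact (sub_eq_zero.mp h5)
    have hnm' : n = m := by exact_mod_cast hnm
    have hr0 : (F ^ m) u₁ = 0 := by
      rw [hnm, sub_self, mul_zero, zero_smul, zero_add] at hrel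
      have := hrel.symm
      rcases smul_eq_zero.mp this with h6 | h6
      · exact absurd h6 (Nat.cast_add_one_ne_zero m)
      · exact h6
    exact P.pow_toEnd_f_ne_zero_of_eq_nat rfl (le_of_eq hnm'.symm) (by rw [← hF]; exact hr0)
  · have hr0 : (F ^ m) u₁ = 0 := by
      rcases smul_eq_zero.mp h3 with h6 | h6
      · exact absurd h6 hA
      · exact h6
    rw [hr0, smul_zero, add_zero] at hrel
    rcases smul_eq_zero.mp hrel.symm with h6 | h6
    · exact hA h6
    · exact hm1 h6

/-- Collapse of the generalized eigenspace of `ad h` at eigenvalue 1. -/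
theorem collapse_one (hhe : ⁅h, e⁆ = (2 : ℂ) • e) (hhf : ⁅h, f⁆ = (-2 : ℂ) • f)
    (hef : ⁅e, f⁆ = h) :
    ∀ (kk : ℕ) (y : g),
      ((toEnd ℂ g g h - (1 : ℂ) • 1) ^ kk) y = 0 → ⁅h, y⁆ = y := by
  set H := toEnd ℂ g g h with hH
  intro kk
  induction kk with
  | zero => intro y hy; simp only [pow_zero, Module.End.one_apply] at hy; simp [hy]
  | succ kk ih =>
    intro y hy
    have hyu : ((H - (1 : ℂ) • 1) ^ kk) ((H - (1 : ℂ) • 1) y) = 0 := by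
      rw [← Module.End.mul_apply, ← pow_succ]; exact hy
    have hu' : ⁅h, (H - (1 : ℂ) • 1) y⁆ = (H - (1 : ℂ) • 1) y := ih _ hyu
    have happ : (H - (1 : ℂ) • 1) y = ⁅h, y⁆ - y := by
      rw [LinearMap.sub_apply, LinearMap.smul_apply, Module.End.one_apply, hH,
        toEnd_apply_apply, one_smul]
    rw [happ] at hu'
    have hz := crux hhe hhf hef (u := ⁅h, y⁆ - y) (v := y) hu' (by abel)
    have := sub_eq_zero.mp hz
    exact this

end W1Aux

open W1Aux in
/-- Let `e, h, f` be an sl₂-triple in a finite-dimensional complex Lie algebra `g`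
and let `B` be a nondegenerate symmetric invariant bilinear form on `g`.  Then
the bilinear form `ω(a,b) = B(f,[a,b])` on the eigenspace
`g₁ = {x : [h,x] = x}` is alternating and nondegenerate. -/
theorem symplectic_form_on_g1
    (g : Type*) [LieRing g] [LieAlgebra ℂ g] [FiniteDimensional ℂ g]
    (e h f : g) (hhe : ⁅h, e⁆ = (2 : ℂ) • e) (hhf : ⁅h, f⁆ = (-2 : ℂ) • f)
    (hef : ⁅e, f⁆ = h)
    (B : g →ₗ[ℂ] g →ₗ[ℂ] ℂ)
    (hsymm : ∀ x y : g, B x y = B y x)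
    (hinv : ∀ x y z : g, B ⁅x, y⁆ z = B x ⁅y, z⁆)
    (hnondeg : ∀ x : g, (∀ y : g, B x y = 0) → x = 0) :
    (∀ a : g, ⁅h, a⁆ = (1 : ℂ) • a → B f ⁅a, a⁆ = 0) ∧
    (∀ a : g, ⁅h, a⁆ = (1 : ℂ) • a →
      (∀ b : g, ⁅h, b⁆ = (1 : ℂ) • b → B f ⁅a, b⁆ = 0) → a = 0) := by
  constructor
  · intro a _
    rw [lie_self, map_zero]
  · intro a ha hab
    by_cases hh0 : h = 0
    · rw [hh0, zero_lie] at ha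
      have := ha.symm
      rw [one_smul] at this
      exact this
    have ha' : ⁅h, a⁆ = a := by rw [ha, one_smul]
    have t : IsSl2Triple h e f :=
      ⟨hh0, hef, by simp [hhe, two_smul], by simp [hhf, two_smul, neg_smul]⟩
    set x := ⁅f, a⁆ with hx
    have hxh : ⁅h, x⁆ = -x := by
      rw [hx, leibniz_lie, hhf, ha', smul_lie]
      module
    have hBx : ∀ z : g, B x ⁅h, z⁆ = B x z := by
      intro z
      have h1 : B x ⁅h, z⁆ = B ⁅h, z⁆ x := hsymm _ _
      have h2 : B ⁅h, z⁆ x = B h ⁅z, x⁆ := hinv h z x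
      have h3 : B h ⁅z, x⁆ = - B h ⁅x, z⁆ := by rw [← lie_skew x z, map_neg, neg_neg]
      have h4 : B h ⁅x, z⁆ = B ⁅h, x⁆ z := (hinv h x z).symm
      rw [h1, h2, h3, h4, hxh]
      simp
    have hBeig : ∀ b : g, ⁅h, b⁆ = b → B x b = 0 := by
      intro b hb
      rw [hx, hinv f a b]
      exact hab b (by rw [hb, one_smul])
    set H := toEnd ℂ g g h with hH
    have hva1 : ∀ (μ : ℂ), μ ≠ 1 → ∀ (kk : ℕ) (y : g),
        ((H - μ • 1) ^ kk) y = 0 → B x y = 0 := by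
      intro μ hμ kk
      induction kk with
      | zero =>
        intro y hy
        simp only [pow_zero, Module.End.one_apply] at hy
        simp [hy]
      | succ kk ih =>
        intro y hy
        have hstep : B x ((H - μ • 1) y) = (1 - μ) * B x y := by
          rw [LinearMap.sub_apply, LinearMap.smul_apply, Module.End.one_apply, hH,
            toEnd_apply_apply, map_sub, hBx, map_smul]
          simp only [smul_eq_mul]
          ring
        have h0 : B x ((H - μ • 1) y) = 0 := by
          refine ih _ ?_
          rw [← Module.End.mul_apply, ← pow_succ]
          exact hy
        rw [hstep] at h0
        rcases mul_eq_zero.mp h0 with h1 | h1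
        · exact absurd (sub_eq_zero.mp h1).symm hμ
        · exact h1
    have hva : ∀ (μ : ℂ) (y : g), y ∈ H.maxGenEigenspace μ → B x y = 0 := by
      intro μ y hy
      rw [Module.End.mem_genEigenspace_top] at hy
      obtain ⟨kk, hkk⟩ := hy
      rw [LinearMap.mem_ker] at hkk
      by_cases hμ : μ = 1
      · subst hμ
        exact hBeig y (collapse_one hhe hhf hef kk y hkk)
      · exact hva1 μ hμ kk y hkk
    have hBx0 : ∀ y : g, B x y = 0 := by
      intro y
      have hy : y ∈ ⨆ μ, H.maxGenEigenspace μ := by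
        rw [Module.End.iSup_maxGenEigenspace_eq_top H]
        trivial
      refine Submodule.iSup_induction (motive := fun y => B x y = 0) _ hy
        (fun μ y hy => hva μ y hy) (by simp) ?_
      intro y z hy hz
      rw [map_add, hy, hz, add_zero]
    have hx0 : ⁅f, a⁆ = 0 := hnondeg x hBx0
    by_contra ha0
    have P : (t.symm).HasPrimitiveVectorWith a (-1 : ℂ) :=
      ⟨ha0, by rw [neg_lie, ha']; module, hx0⟩
    obtain ⟨N, hN⟩ := P.exists_nat
    have h1 : (-1 : ℂ) = (N : ℂ) := hN
    have h2 : (-1 : ℤ) = (N : ℤ) := by exact_mod_cast h1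
    omega
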